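/- Dyadic localization lemma: let a > 0, 0 ≤ α < d, f ∈ L¹_loc(γ') nonnegative. If for some cube Q ∈ 𝒬_a and some t > 0 one has ℓ(Q)^{α−d} ∫_Q f dγ' > t, then there exists a dyadic cube P (side length a power of 2, vertices on the corresponding lattice) with P ∈ 𝒬_{2a+3√d·a²}, Q ⊆ 3P, and ℓ(P)^{α−d} ∫_P f dγ' > 2^{α−2d} t. -/

import Mathlib

open MeasureTheory ENNReal Set

noncomputable section

abbrev E (d : ℕ) := EuclideanSpace ℝ (Fin d)

def gammaRad (d : ℕ) (α : ℝ) : Measure (E d) :=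
  volume.withDensity fun x => ENNReal.ofReal (Real.exp (-(α/d) * ‖x‖^2))

def cube (d : ℕ) (c : E d) (l : ℝ) : Set (E d) := {x | ∀ i, |x i - c i| ≤ l / 2}

def mfun {d : ℕ} (x : E d) : ℝ := if ‖x‖ ≤ 1 then 1 else 1 / ‖x‖

def adm (d : ℕ) (a : ℝ) (c : E d) (l : ℝ) : Prop := 0 < l ∧ l ≤ a * mfun c

/-- The cube with center `c` and side `l` is a dyadic cube: `l = 2^k` and the
vertices of the cube lie on the lattice `2^k ℤ^d`. -/
def IsDyadic (d : ℕ) (c : E d) (l : ℝ) : Prop :=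
  ∃ (k : ℤ) (m : Fin d → ℤ), l = 2 ^ k ∧ ∀ i, c i = ((m i : ℝ) + 1/2) * 2 ^ k

lemma mfun_le_one {d : ℕ} (x : E d) : mfun x ≤ 1 := by
  unfold mfun
  split
  · exact le_rfl
  · rename_i h
    push_neg at h
    rw [div_le_one (by linarith)]
    linarith

lemma norm_le_sqrt_mul {d : ℕ} (v : E d) (r : ℝ) (hr : 0 ≤ r) (h : ∀ i, |v i| ≤ r) :
    ‖v‖ ≤ Real.sqrt d * r := by
  rw [EuclideanSpace.norm_eq]
  have h1 : ∑ i, ‖v i‖ ^ 2 ≤ (d : ℝ) * r ^ 2 := by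
    calc ∑ i, ‖v i‖ ^ 2 ≤ ∑ _i : Fin d, r ^ 2 := by
          refine Finset.sum_le_sum fun i _ => ?_
          have := h i
          have : ‖v i‖ ≤ r := by rwa [Real.norm_eq_abs]
          nlinarith [norm_nonneg (v i)]
      _ = (d : ℝ) * r ^ 2 := by simp [Finset.sum_const]
  calc Real.sqrt (∑ i, ‖v i‖ ^ 2) ≤ Real.sqrt ((d : ℝ) * r ^ 2) := Real.sqrt_le_sqrt h1
    _ = Real.sqrt d * r := by
        rw [Real.sqrt_mul (Nat.cast_nonneg d), Real.sqrt_sq hr]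

set_option maxHeartbeats 1600000 in
/-- Dyadic localization lemma: if `ℓ(Q)^{α-d} ∫_Q f dγ' > t` for some `Q ∈ 𝒬_a`, then there
is a dyadic cube `P ∈ 𝒬_{2a+3√d·a²}` with `Q ⊆ 3P` and `ℓ(P)^{α-d} ∫_P f dγ' > 2^{α-2d} t`. -/
theorem dyadic_localization (d : ℕ) (a α : ℝ) (ha : 0 < a) (hα : 0 ≤ α) (hαd : α < d)
    (f : E d → ℝ≥0∞) (hf : Measurable f) (c : E d) (l : ℝ) (hQ : adm d a c l)
    (t : ℝ≥0∞) (ht : 0 < t)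
    (h : t < ENNReal.ofReal (l ^ (α - d)) * ∫⁻ x in cube d c l, f x ∂(gammaRad d α)) :
    ∃ (cP : E d) (lP : ℝ), IsDyadic d cP lP ∧
      adm d (2*a + 3*Real.sqrt d*a^2) cP lP ∧
      cube d c l ⊆ cube d cP (3*lP) ∧
      ENNReal.ofReal ((2:ℝ) ^ (α - 2*d)) * t <
        ENNReal.ofReal (lP ^ (α - d)) * ∫⁻ x in cube d cP lP, f x ∂(gammaRad d α) := by
  obtain ⟨hl, hla⟩ := hQ
  set μ := gammaRad d α with hμ
  -- choose the dyadic scale k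
  set k : ℤ := ⌈Real.logb 2 l⌉ with hk
  set lP : ℝ := 2 ^ k with hlPdef
  have hlP : 0 < lP := zpow_pos (by norm_num) k
  have hl2k : l ≤ lP := by
    calc l = 2 ^ Real.logb 2 l := (Real.rpow_logb two_pos (by norm_num) hl).symm
      _ ≤ 2 ^ (k : ℝ) := Real.rpow_le_rpow_of_exponent_le one_le_two (Int.le_ceil _)
      _ = lP := Real.rpow_intCast 2 k
  have h2kl : lP ≤ 2 * l := by
    have hk1 : (k : ℝ) ≤ Real.logb 2 l + 1 := by
      have := Int.ceil_lt_add_one (Real.logb 2 l); linarith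
    calc lP = 2 ^ (k : ℝ) := (Real.rpow_intCast 2 k).symm
      _ ≤ 2 ^ (Real.logb 2 l + 1) := Real.rpow_le_rpow_of_exponent_le one_le_two hk1
      _ = 2 ^ Real.logb 2 l * 2 := by rw [Real.rpow_add two_pos, Real.rpow_one]
      _ = 2 * l := by rw [Real.rpow_logb two_pos (by norm_num) hl]; ring
  -- dyadic cubes covering Q
  set m₀ : Fin d → ℤ := fun i => ⌊(c i - l / 2) / lP⌋ with hm₀
  set cs : (Fin d → Bool) → E d :=
    fun s => (WithLp.toLp 2 (fun i => ((m₀ i + (if s i then 1 else 0) : ℤ) + 1 / 2 : ℝ) * lP) : E d) with hcs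
  have hcover : cube d c l ⊆ ⋃ s : Fin d → Bool, (cube d (cs s) lP ∩ cube d c l) := by
    intro x hx
    set n : Fin d → ℤ := fun i => ⌊x i / lP⌋ with hn
    -- each coordinate's floor is m₀ i or m₀ i + 1
    have hrange : ∀ i, n i = m₀ i ∨ n i = m₀ i + 1 := by
      intro i
      have hx1 : c i - l / 2 ≤ x i := by have := hx i; rw [abs_le] at this; linarith
      have hx2 : x i ≤ c i + l / 2 := by have := hx i; rw [abs_le] at this; linarith
      have hlow : m₀ i ≤ n i := Int.floor_le_floor (by gcongr)
      have hhigh : n i ≤ m₀ i + 1 := by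
        have hq : x i / lP ≤ ((c i - l / 2) + lP) / lP := by gcongr; linarith
        rw [add_div, div_self (ne_of_gt hlP)] at hq
        calc n i ≤ ⌊(c i - l / 2) / lP + 1⌋ := Int.floor_le_floor hq
          _ = m₀ i + 1 := by rw [Int.floor_add_one]
      omega
    refine mem_iUnion.2 ⟨fun i => decide (n i = m₀ i + 1), ⟨?_, hx⟩⟩
    intro i
    have hni : ((m₀ i + (if decide (n i = m₀ i + 1) then 1 else 0) : ℤ) : ℝ) = (n i : ℝ) := by
      rcases hrange i with h' | h' <;> simp [h']
    have h1 : (n i : ℝ) * lP ≤ x i := by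
      have := Int.floor_le (x i / lP)
      calc (n i : ℝ) * lP ≤ (x i / lP) * lP := by
            exact mul_le_mul_of_nonneg_right this hlP.le
        _ = x i := div_mul_cancel₀ _ (ne_of_gt hlP)
    have h2 : x i ≤ ((n i : ℝ) + 1) * lP := by
      have := (Int.lt_floor_add_one (x i / lP)).le
      calc x i = (x i / lP) * lP := (div_mul_cancel₀ _ (ne_of_gt hlP)).symm
        _ ≤ ((n i : ℝ) + 1) * lP := mul_le_mul_of_nonneg_right this hlP.le
    show |x i - _| ≤ lP / 2
    have hcsi : cs (fun i => decide (n i = m₀ i + 1)) i = ((n i : ℝ) + 1 / 2) * lP := by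
      simp only [hcs]
      rw [hni]
    rw [hcsi, abs_le]
    constructor <;> nlinarith
  -- pigeonhole
  set g : (Fin d → Bool) → ℝ≥0∞ := fun s => ∫⁻ x in cube d (cs s) lP ∩ cube d c l, f x ∂μ with hg
  set IQ : ℝ≥0∞ := ∫⁻ x in cube d c l, f x ∂μ with hIQ
  have hsum : IQ ≤ ∑ s : Fin d → Bool, g s := by
    calc IQ ≤ ∫⁻ x in ⋃ s : Fin d → Bool, (cube d (cs s) lP ∩ cube d c l), f x ∂μ :=
          lintegral_mono_set hcover
      _ ≤ ∑' s : Fin d → Bool, g s := lintegral_iUnion_le _ _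
      _ = ∑ s : Fin d → Bool, g s := tsum_fintype _
  obtain ⟨s, -, hsmax⟩ := Finset.exists_max_image (Finset.univ : Finset (Fin d → Bool)) g
    ⟨fun _ => false, Finset.mem_univ _⟩
  have hcard : Fintype.card (Fin d → Bool) = 2 ^ d := by simp
  have hIQle : IQ ≤ 2 ^ d * g s := by
    calc IQ ≤ ∑ s' : Fin d → Bool, g s' := hsum
      _ ≤ Finset.univ.card • g s :=
          Finset.sum_le_card_nsmul _ _ _ (fun x hx => hsmax x hx)
      _ = 2 ^ d * g s := by
          rw [nsmul_eq_mul, Finset.card_univ, hcard]; push_cast; ring_nf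
  have hIQpos : 0 < IQ := by
    by_contra hc
    push_neg at hc
    have : IQ = 0 := le_antisymm hc zero_le
    rw [this, mul_zero] at h
    exact absurd h (not_lt.2 zero_le)
  have hgspos : 0 < g s := by
    by_contra hc
    push_neg at hc
    have hgz : g s = 0 := le_antisymm hc zero_le
    rw [hgz, mul_zero] at hIQle
    exact absurd (le_antisymm hIQle zero_le) (ne_of_gt hIQpos)
  have hne : (cube d (cs s) lP ∩ cube d c l).Nonempty := by
    by_contra hc
    rw [Set.not_nonempty_iff_eq_empty] at hc
    have : g s = 0 := by rw [hg]; simp [hc]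
    exact absurd this (ne_of_gt hgspos)
  obtain ⟨y, hyP, hyQ⟩ := hne
  -- bound on |cs s i - c i| and the norm of the center
  have hcoord : ∀ i, |cs s i - c i| ≤ 3 * l / 2 := by
    intro i
    have h1 : |y i - cs s i| ≤ lP / 2 := hyP i
    have h2 : |y i - c i| ≤ l / 2 := hyQ i
    calc |cs s i - c i| = |(c i - y i) + (y i - cs s i)| * (-1 : ℝ)⁻¹ * (-1 : ℝ)⁻¹ := by
          rw [show (c i - y i) + (y i - cs s i) = -(cs s i - c i) by ring, abs_neg]; ring
      _ = |(c i - y i) + (y i - cs s i)| := by norm_num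
      _ ≤ |c i - y i| + |y i - cs s i| := abs_add_le _ _
      _ ≤ l / 2 + lP / 2 := by
          rw [abs_sub_comm (c i) (y i)]
          exact add_le_add h2 h1
      _ ≤ 3 * l / 2 := by linarith
  have hnormcP : ‖cs s‖ ≤ ‖c‖ + Real.sqrt d * (3 * l / 2) := by
    have hd : ‖cs s - c‖ ≤ Real.sqrt d * (3 * l / 2) := by
      refine norm_le_sqrt_mul _ _ (by positivity) fun i => ?_
      have : (cs s - c) i = cs s i - c i := rfl
      rw [this]; exact hcoord i
    calc ‖cs s‖ = ‖c + (cs s - c)‖ := by congr 1; abel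
      _ ≤ ‖c‖ + ‖cs s - c‖ := norm_add_le _ _
      _ ≤ ‖c‖ + Real.sqrt d * (3 * l / 2) := by linarith
  -- admissibility of P
  have hadm : adm d (2 * a + 3 * Real.sqrt d * a ^ 2) (cs s) lP := by
    refine ⟨hlP, ?_⟩
    have hsd : (0:ℝ) ≤ Real.sqrt d := Real.sqrt_nonneg d
    have hmc_le : mfun c ≤ 1 := mfun_le_one c
    have hla' : 0 < mfun c := by
      by_contra hc
      push_neg at hc
      have : a * mfun c ≤ 0 := mul_nonpos_of_nonneg_of_nonpos ha.le hc
      linarith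
    unfold mfun
    split
    · -- ‖cs s‖ ≤ 1
      have : l ≤ a := by
        calc l ≤ a * mfun c := hla
          _ ≤ a * 1 := by nlinarith
          _ = a := mul_one a
      have h1 : (0:ℝ) ≤ 3 * Real.sqrt d * a ^ 2 := by positivity
      nlinarith
    · rename_i hcP
      push_neg at hcP
      have hcPpos : (0:ℝ) < ‖cs s‖ := by linarith
      rw [mul_one_div, le_div_iff₀ hcPpos]
      by_cases hc1 : ‖c‖ ≤ 1
      · -- mfun c = 1, l ≤ a
        have hmc : mfun c = 1 := if_pos hc1
        have hlea : l ≤ a := by rw [hmc, mul_one] at hla; exact hla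
        have hb : ‖cs s‖ ≤ 1 + Real.sqrt d * (3 * l / 2) := by
          calc ‖cs s‖ ≤ ‖c‖ + Real.sqrt d * (3 * l / 2) := hnormcP
            _ ≤ 1 + Real.sqrt d * (3 * l / 2) := by linarith
        calc lP * ‖cs s‖ ≤ (2 * l) * (1 + Real.sqrt d * (3 * l / 2)) :=
              mul_le_mul h2kl hb (norm_nonneg _) (by linarith)
          _ = 2 * l + 3 * Real.sqrt d * l ^ 2 := by ring
          _ ≤ 2 * a + 3 * Real.sqrt d * a ^ 2 := by
              nlinarith [mul_nonneg hsd (show (0:ℝ) ≤ a ^ 2 - l ^ 2 by nlinarith)]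
      · push_neg at hc1
        have hmc : mfun c = 1 / ‖c‖ := if_neg (not_le.2 hc1)
        have hcpos : (0:ℝ) < ‖c‖ := by linarith
        have hlc : l * ‖c‖ ≤ a := by
          rw [hmc, mul_one_div] at hla
          calc l * ‖c‖ ≤ (a / ‖c‖) * ‖c‖ := mul_le_mul_of_nonneg_right hla hcpos.le
            _ = a := div_mul_cancel₀ a (ne_of_gt hcpos)
        have hlea : l ≤ a := by nlinarith
        have hkey : ‖cs s‖ ≤ ‖c‖ + Real.sqrt d * (3 * l / 2) := hnormcP
        calc lP * ‖cs s‖ ≤ (2 * l) * (‖c‖ + Real.sqrt d * (3 * l / 2)) :=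
              mul_le_mul h2kl hkey (norm_nonneg _) (by linarith)
          _ = 2 * (l * ‖c‖) + 3 * Real.sqrt d * l ^ 2 := by ring
          _ ≤ 2 * a + 3 * Real.sqrt d * a ^ 2 := by
              nlinarith [mul_nonneg hsd (show (0:ℝ) ≤ a ^ 2 - l ^ 2 by nlinarith)]
  -- Q ⊆ 3P
  have hsub : cube d c l ⊆ cube d (cs s) (3 * lP) := by
    intro x hx i
    have h1 : |x i - c i| ≤ l / 2 := hx i
    have h2 : |y i - c i| ≤ l / 2 := hyQ i
    have h3 : |y i - cs s i| ≤ lP / 2 := hyP i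
    show |x i - cs s i| ≤ 3 * lP / 2
    rw [abs_le] at h1 h2 h3 ⊢
    constructor <;> linarith
  -- the integral estimate
  refine ⟨cs s, lP, ?_, hadm, hsub, ?_⟩
  · exact ⟨k, fun i => m₀ i + (if s i then 1 else 0), rfl, fun i => by push_cast [hcs]; ring⟩
  · set J : ℝ≥0∞ := ∫⁻ x in cube d (cs s) lP, f x ∂μ with hJ
    have hgJ : g s ≤ J := lintegral_mono_set inter_subset_left
    have hIQJ : IQ ≤ 2 ^ d * J := by
      calc IQ ≤ 2 ^ d * g s := hIQle
        _ ≤ 2 ^ d * J := mul_le_mul_right hgJ _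
    have hc0 : ENNReal.ofReal ((2:ℝ) ^ (α - 2 * d)) ≠ 0 := by
      simp only [ne_eq, ENNReal.ofReal_eq_zero, not_le]
      positivity
    have hcT : ENNReal.ofReal ((2:ℝ) ^ (α - 2 * d)) ≠ ∞ := ENNReal.ofReal_ne_top
    calc ENNReal.ofReal ((2:ℝ) ^ (α - 2 * d)) * t
        < ENNReal.ofReal ((2:ℝ) ^ (α - 2 * d)) * (ENNReal.ofReal (l ^ (α - d)) * IQ) := by
          rw [ENNReal.mul_lt_mul_iff_right hc0 hcT]; exact h
      _ ≤ ENNReal.ofReal ((2:ℝ) ^ (α - 2 * d)) * (ENNReal.ofReal (l ^ (α - d)) * (2 ^ d * J)) := by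
          gcongr
      _ = ENNReal.ofReal ((2:ℝ) ^ (α - 2 * d) * l ^ (α - d) * 2 ^ d) * J := by
          rw [ENNReal.ofReal_mul (by positivity), ENNReal.ofReal_mul (by positivity)]
          have : ((2 : ℝ≥0∞) ^ d) = ENNReal.ofReal ((2:ℝ) ^ d) := by
            rw [ENNReal.ofReal_pow (by norm_num)]
            norm_num
          rw [this]; ring
      _ = ENNReal.ofReal ((2 * l) ^ (α - d)) * J := by
          congr 1
          rw [Real.mul_rpow (by norm_num) hl.le]
          rw [show (2:ℝ) ^ (α - 2 * d) * l ^ (α - d) * 2 ^ d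
              = ((2:ℝ) ^ (α - 2 * d) * 2 ^ d) * l ^ (α - d) by ring]
          congr 1
          rw [← Real.rpow_natCast 2 d, ← Real.rpow_add two_pos]
          congr 1
          ring
      _ ≤ ENNReal.ofReal (lP ^ (α - d)) * J := by
          apply mul_le_mul_left
          apply ENNReal.ofReal_le_ofReal
          exact Real.rpow_le_rpow_of_nonpos hlP h2kl (by linarith)

end
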